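/- Let ε : E → 𝒯^× be a cartesian multitensor morphism where 𝒯 is the identity monad on Set (so 𝒯^×ₙ(X₁,...,Xₙ) = ∏ᵢXᵢ). Then E is determined by the sets Ēₙ := Eₙ(1,...,1) via Eₙ(X₁,...,Xₙ) ≅ Ēₙ × ∏ᵢXᵢ, and the multitensor structure (unit and substitution) of E corresponds exactly to a non-symmetric operad structure (Ē, ū, σ̄) in Set: an element ū ∈ Ē₁ and functions σ̄ : Ē_k × Ē_{n₁} × ... × Ē_{n_k} → Ē_{n₁+...+n_k} satisfying the non-symmetric operad axioms. -/

import Mathlib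

set_option linter.unusedSectionVars false

open CategoryTheory CategoryTheory.Limits

universe w v u

namespace Paper

/-- Splitting a sigma type over `Fin (k+1)` as first block plus the rest. -/
def sigmaSucc {k : ℕ} (F : Fin (k + 1) → Type*) :
    (Σ i, F i) ≃ F 0 ⊕ (Σ i : Fin k, F i.succ) where
  toFun x := Fin.cases (motive := fun i => F i → F 0 ⊕ (Σ i : Fin k, F i.succ))
    (fun j => Sum.inl j) (fun i j => Sum.inr ⟨i, j⟩) x.1 x.2
  invFun y := y.elim (fun j => ⟨0, j⟩) (fun x => ⟨x.1.succ, x.2⟩)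
  left_inv := by rintro ⟨i, j⟩; induction i using Fin.cases <;> rfl
  right_inv := by rintro (j | ⟨i, j⟩) <;> rfl

/-- The canonical order preserving identification of a sum of finite ordinals,
    listing the blocks in order. -/
def finSigma : ∀ {k : ℕ} (n : Fin k → ℕ), (Σ i, Fin (n i)) ≃ Fin (∑ i, n i)
  | 0, n =>
      (Equiv.equivOfIsEmpty _ (Fin 0)).trans (finCongr (by simp))
  | (k+1), n =>
      (sigmaSucc _).trans <|
        ((Equiv.refl (Fin (n 0))).sumCongr (finSigma (fun i => n i.succ))).trans <|
          finSumFinEquiv.trans (finCongr (Fin.sum_univ_succ n).symm)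

/-- Concatenation of a family of families along `finSigma`. -/
def concat {k : ℕ} (n : Fin k → ℕ) {α : Sort*} (X : ∀ i, Fin (n i) → α) :
    Fin (∑ i, n i) → α :=
  fun p => X ((finSigma n).symm p).1 ((finSigma n).symm p).2

/-- A multitensor (lax monoidal structure) on `V` : a family of functors
`Eₙ : Vⁿ ⥤ V`, a unit `u : X ⟶ E₁X` and substitution maps
`σ : E_k(E_{n₁}(X₁₁,…),…) ⟶ E_{n₁+⋯+n_k}(X₁₁,…,X_{k n_k})` which are natural
and satisfy unit and associativity laws. -/
structure Multitensor (V : Type u) [Category.{v} V] where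
  E : ∀ n : ℕ, (∀ _ : Fin n, V) ⥤ V
  unit : ∀ X : V, X ⟶ (E 1).obj (fun _ => X)
  unit_natural : ∀ {X Y : V} (f : X ⟶ Y),
    f ≫ unit Y = unit X ≫ (E 1).map (fun _ => f)
  subst : ∀ {k : ℕ} (n : Fin k → ℕ) (X : ∀ i : Fin k, Fin (n i) → V),
    (E k).obj (fun i => (E (n i)).obj (X i)) ⟶ (E (∑ i, n i)).obj (concat n X)
  subst_natural : ∀ {k : ℕ} (n : Fin k → ℕ) {X Y : ∀ i : Fin k, Fin (n i) → V}
    (f : ∀ i j, X i j ⟶ Y i j),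
    (E k).map (fun i => (E (n i)).map (f i)) ≫ subst n Y =
      subst n X ≫ (E (∑ i, n i)).map
        (fun p => f ((finSigma n).symm p).1 ((finSigma n).symm p).2)
  subst_unit_left : ∀ {n : ℕ} (X : Fin n → V),
    HEq (unit ((E n).obj X) ≫ subst (fun _ : Fin 1 => n) (fun _ => X))
      (𝟙 ((E n).obj X))
  subst_unit_right : ∀ {n : ℕ} (X : Fin n → V),
    HEq ((E n).map (fun i => unit (X i)) ≫ subst (fun _ : Fin n => 1) (fun i _ => X i))
      (𝟙 ((E n).obj X))
  subst_assoc : ∀ {k : ℕ} (n : Fin k → ℕ) (m : ∀ i : Fin k, Fin (n i) → ℕ)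
    (X : ∀ (i : Fin k) (j : Fin (n i)), Fin (m i j) → V),
    HEq ((E k).map (fun i => subst (m i) (X i)) ≫
          subst (fun i => ∑ j, m i j) (fun i => concat (m i) (X i)))
        (subst n (fun i j => (E (m i j)).obj (X i j)) ≫
          subst (fun p => m ((finSigma n).symm p).1 ((finSigma n).symm p).2)
                (fun p => X ((finSigma n).symm p).1 ((finSigma n).symm p).2))


section
variable {V : Type u} [Category.{v} V] [HasFiniteLimits V]

/-- The property that a multitensor `E` is the multitensor `T^×` of a monad `T`:
`T^×ₙ(X₁,…,Xₙ) = ∏ᵢ T Xᵢ`, the unit is the monad unit `η`, and the substitution is the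
composite `∏ᵢT∏ⱼTX_{ij} ⟶ ∏ᵢ∏ⱼT²X_{ij} ⟶ ∏_{ij}TX_{ij}` built from the canonical
product comparison maps and the monad multiplication `μ` (expressed here via the product
projections). -/
structure IsTcross (T : CategoryTheory.Monad V) (E : Multitensor V) : Prop where
  obj_eq : ∀ (n : ℕ) (X : Fin n → V), (E.E n).obj X = ∏ᶜ (fun i => T.obj (X i))
  map_eq : ∀ (n : ℕ) (X Y : Fin n → V) (f : ∀ i, X i ⟶ Y i) (i : Fin n),
    (E.E n).map f ≫ eqToHom (obj_eq n Y) ≫ Pi.π _ i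
      = eqToHom (obj_eq n X) ≫ Pi.π _ i ≫ T.map (f i)
  unit_eq : ∀ (X : V) (i : Fin 1),
    E.unit X ≫ eqToHom (obj_eq 1 (fun _ => X)) ≫ Pi.π _ i = T.η.app X
  subst_eq : ∀ {k : ℕ} (n : Fin k → ℕ) (X : ∀ i, Fin (n i) → V) (p : Fin (∑ i, n i)),
    E.subst n X ≫ eqToHom (obj_eq _ (concat n X)) ≫ Pi.π _ p
      = eqToHom (obj_eq k (fun i => (E.E (n i)).obj (X i)))
          ≫ Pi.π _ ((finSigma n).symm p).1
          ≫ T.map (eqToHom (obj_eq _ (X ((finSigma n).symm p).1))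
              ≫ Pi.π _ ((finSigma n).symm p).2)
          ≫ T.μ.app (X ((finSigma n).symm p).1 ((finSigma n).symm p).2)

end

section
variable {V : Type u} [Category.{v} V]

/-- A natural transformation is cartesian when all naturality squares are pullbacks. -/
def IsCartesianNT {C : Type w} [Category.{v'} C] {F G : C ⥤ V} (α : F ⟶ G) : Prop :=
  ∀ {X Y : C} (f : X ⟶ Y), IsPullback (α.app X) (F.map f) (G.map f) (α.app Y)

/-- A morphism of multitensors: natural transformations commuting with units and
substitutions. -/
structure MultHom (E F : Multitensor V) where
  app : ∀ n : ℕ, E.E n ⟶ F.E n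
  unit_comm : ∀ X : V, E.unit X ≫ (app 1).app (fun _ => X) = F.unit X
  subst_comm : ∀ {k : ℕ} (n : Fin k → ℕ) (X : ∀ i, Fin (n i) → V),
    E.subst n X ≫ (app (∑ i, n i)).app (concat n X)
      = (app k).app (fun i => (E.E (n i)).obj (X i))
        ≫ (F.E k).map (fun i => (app (n i)).app (X i)) ≫ F.subst n X

end

end Paper

open Paper CategoryTheory.Limits
namespace Stmt17

open Paper CategoryTheory CategoryTheory.Limits

universe u' v'

theorem heq_apply {A : Type u'} {B C : Type u'} (hBC : B = C) {f : A ⟶ B} {g : A ⟶ C}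
    (h : HEq f g) (a : A) : HEq (f a) (g a) := by
  subst hBC
  exact heq_of_eq (types_congr_hom (eq_of_heq h) a)

variable {P E : Multitensor (Type u)}

/-- The terminal morphism in the pi category. -/
def tmor {n : ℕ} (X : Fin n → Type u) :
    X ⟶ (fun _ : Fin n => PUnit.{u+1}) := fun _ => ↾fun _ => PUnit.unit

/-- `Ēₙ`. -/
abbrev Eb (E : Multitensor (Type u)) (n : ℕ) : Type u :=
  (E.E n).obj (fun _ => PUnit.{u+1})

def bar {n : ℕ} {X : Fin n → Type u} (g : (E.E n).obj X) : Eb E n :=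
  (E.E n).map (tmor X) g

section

variable (pp : ∀ (n : ℕ) (X : Fin n → Type u), (P.E n).obj X ≃ ∀ i, X i)
variable (ε : MultHom E P)

def epr {n : ℕ} {X : Fin n → Type u} (g : (E.E n).obj X) : ∀ i, X i :=
  pp n X ((ε.app n).app X g)

variable (hcart : ∀ n : ℕ, IsCartesianNT (ε.app n))

noncomputable def eqv (n : ℕ) (X : Fin n → Type u) :
    (E.E n).obj X ≃ Eb E n × ∀ i, X i where
  toFun g := (bar g, epr pp ε g)
  invFun y := (hcart n (tmor X)).lift (↾fun _ : PUnit.{u+1} => (pp n X).symm y.2)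
      (↾fun _ => y.1)
      (by
        have : Subsingleton ((P.E n).obj (fun _ : Fin n => PUnit.{u+1})) :=
          (pp n (fun _ => PUnit.{u+1})).subsingleton
        exact ConcreteCategory.hom_ext _ _ fun _ => Subsingleton.elim _ _) PUnit.unit
  left_inv g := by
    have h := (hcart n (tmor X)).hom_ext
      (k := ↾fun _ : PUnit.{u+1} => (hcart n (tmor X)).lift
          (↾fun _ : PUnit.{u+1} => (pp n X).symm (epr pp ε g))
          (↾fun _ => bar g)
          (by
            have : Subsingleton ((P.E n).obj (fun _ : Fin n => PUnit.{u+1})) :=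
              (pp n (fun _ => PUnit.{u+1})).subsingleton
            exact ConcreteCategory.hom_ext _ _ fun _ => Subsingleton.elim _ _) PUnit.unit)
      (l := ↾fun _ : PUnit.{u+1} => g) ?_ ?_
    · exact types_congr_hom h PUnit.unit
    · refine ConcreteCategory.hom_ext _ _ fun w => ?_
      show (ε.app n).app X _ = (ε.app n).app X g
      have h1 := types_congr_hom ((hcart n (tmor X)).lift_fst
        (↾fun _ : PUnit.{u+1} => (pp n X).symm (epr pp ε g))
        (↾fun _ => bar g)
        (by
          have : Subsingleton ((P.E n).obj (fun _ : Fin n => PUnit.{u+1})) :=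
            (pp n (fun _ => PUnit.{u+1})).subsingleton
          exact ConcreteCategory.hom_ext _ _ fun _ => Subsingleton.elim _ _)) PUnit.unit
      simp only [types_comp_apply, TypeCat.ofHom_apply] at h1
      refine Eq.trans h1 ?_
      exact (pp n X).symm_apply_apply _
    · refine ConcreteCategory.hom_ext _ _ fun w => ?_
      show (E.E n).map (tmor X) _ = (E.E n).map (tmor X) g
      have h1 := types_congr_hom ((hcart n (tmor X)).lift_snd
        (↾fun _ : PUnit.{u+1} => (pp n X).symm (epr pp ε g))
        (↾fun _ => bar g)
        (by
          have : Subsingleton ((P.E n).obj (fun _ : Fin n => PUnit.{u+1})) :=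
            (pp n (fun _ => PUnit.{u+1})).subsingleton
          exact ConcreteCategory.hom_ext _ _ fun _ => Subsingleton.elim _ _)) PUnit.unit
      simp only [types_comp_apply, TypeCat.ofHom_apply] at h1
      exact h1
  right_inv y := by
    obtain ⟨a, x⟩ := y
    have hw : (↾fun _ : PUnit.{u+1} => (pp n X).symm x) ≫ (P.E n).map (tmor X)
        = (↾fun _ => a) ≫ (ε.app n).app (fun _ => PUnit.{u+1}) := by
      have : Subsingleton ((P.E n).obj (fun _ : Fin n => PUnit.{u+1})) :=
        (pp n (fun _ => PUnit.{u+1})).subsingleton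
      exact ConcreteCategory.hom_ext _ _ fun _ => Subsingleton.elim _ _
    have h1 := types_congr_hom ((hcart n (tmor X)).lift_fst
      (↾fun _ : PUnit.{u+1} => (pp n X).symm x) (↾fun _ => a) hw) PUnit.unit
    have h2 := types_congr_hom ((hcart n (tmor X)).lift_snd
      (↾fun _ : PUnit.{u+1} => (pp n X).symm x) (↾fun _ => a) hw) PUnit.unit
    simp only [types_comp_apply, TypeCat.ofHom_apply] at h1 h2
    refine Prod.ext ?_ ?_
    · exact h2
    · show epr pp ε _ = x
      unfold epr
      rw [h1]
      exact (pp n X).apply_symm_apply x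

end

end Stmt17
namespace Stmt17
open Paper CategoryTheory CategoryTheory.Limits

variable {P E : Multitensor (Type u)}

theorem bar_map {n : ℕ} {X Y : Fin n → Type u} (f : X ⟶ Y) (g : (E.E n).obj X) :
    bar ((E.E n).map f g) = bar g := by
  unfold bar
  rw [← FunctorToTypes.map_comp_apply]
  rfl

theorem bar_bar {n : ℕ} (a : Eb E n) : bar a = a := by
  unfold bar
  have : tmor (fun _ : Fin n => PUnit.{u+1}) = 𝟙 _ := rfl
  rw [this, FunctorToTypes.map_id_apply]

section
variable (pp : ∀ (n : ℕ) (X : Fin n → Type u), (P.E n).obj X ≃ ∀ i, X i)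
variable (ε : MultHom E P)
variable
  (pp_map : ∀ (n : ℕ) (X Y : Fin n → Type u) (f : X ⟶ Y) (g : (P.E n).obj X) (i : Fin n),
    pp n Y ((P.E n).map f g) i = f i (pp n X g i))
  (pp_unit : ∀ (X : Type u) (x : X) (i : Fin 1),
    pp 1 (fun _ => X) (P.unit X x) i = x)
  (pp_subst : ∀ {k : ℕ} (n : Fin k → ℕ) (X : ∀ i, Fin (n i) → Type u)
    (h : (P.E k).obj (fun i => (P.E (n i)).obj (X i))) (p : Fin (∑ i, n i)),
    pp _ (concat n X) (P.subst n X h) p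
      = pp _ (X ((finSigma n).symm p).1)
          (pp k _ h ((finSigma n).symm p).1) ((finSigma n).symm p).2)

include pp_map in
theorem epr_map {n : ℕ} {X Y : Fin n → Type u} (f : X ⟶ Y) (g : (E.E n).obj X) (i : Fin n) :
    epr pp ε ((E.E n).map f g) i = f i (epr pp ε g i) := by
  unfold epr
  rw [FunctorToTypes.naturality]
  exact pp_map n X Y f _ i

variable (hcart : ∀ n : ℕ, IsCartesianNT (ε.app n))

theorem eqv_fst {n : ℕ} {X : Fin n → Type u} (g : (E.E n).obj X) :
    (eqv pp ε hcart n X g).1 = bar g := rfl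

include pp_map in
theorem eqv_map {n : ℕ} (X Y : Fin n → Type u) (f : X ⟶ Y) (g : (E.E n).obj X) :
    eqv pp ε hcart n Y ((E.E n).map f g)
      = ((eqv pp ε hcart n X g).1, fun i => f i ((eqv pp ε hcart n X g).2 i)) := by
  refine Prod.ext (bar_map f g) (funext fun i => ?_)
  exact epr_map pp ε pp_map f g i

include pp_unit in
theorem eqv_unit (X : Type u) (x : X) :
    eqv pp ε hcart 1 (fun _ => X) (E.unit X x)
      = (E.unit PUnit.{u+1} PUnit.unit, fun _ => x) := by
  refine Prod.ext ?_ (funext fun i => ?_)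
  · show bar (E.unit X x) = _
    have h := types_congr_hom (E.unit_natural (↾fun _ : X => PUnit.unit.{u+1})) x
    simp only [types_comp_apply, TypeCat.ofHom_apply] at h
    exact h.symm
  · show epr pp ε (E.unit X x) i = x
    unfold epr
    have h := types_congr_hom (ε.unit_comm X) x
    simp only [types_comp_apply] at h
    rw [h]
    exact pp_unit X x i

theorem bar_subst {k : ℕ} (n : Fin k → ℕ) (X : ∀ i, Fin (n i) → Type u)
    (g : (E.E k).obj (fun i => (E.E (n i)).obj (X i))) :
    bar (E.subst n X g)
      = E.subst n (fun i _ => PUnit.{u+1})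
          ((E.E k).map (fun i => (E.E (n i)).map (tmor (X i))) g) := by
  have h := types_congr_hom (E.subst_natural n (Y := fun i _ => PUnit.{u+1})
    (fun i => tmor (X i))) g
  simp only [types_comp_apply] at h
  exact h.symm

include pp_map pp_subst in
theorem epr_subst {k : ℕ} (n : Fin k → ℕ) (X : ∀ i, Fin (n i) → Type u)
    (g : (E.E k).obj (fun i => (E.E (n i)).obj (X i))) (p : Fin (∑ i, n i)) :
    epr pp ε (E.subst n X g) p
      = epr pp ε (epr pp ε g ((finSigma n).symm p).1) ((finSigma n).symm p).2 := by
  unfold epr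
  have h := types_congr_hom (ε.subst_comm n X) g
  simp only [types_comp_apply] at h
  rw [h, pp_subst, pp_map]

end
end Stmt17
namespace Stmt17
open Paper CategoryTheory CategoryTheory.Limits

variable {P E : Multitensor (Type u)}

section
variable (pp : ∀ (n : ℕ) (X : Fin n → Type u), (P.E n).obj X ≃ ∀ i, X i)
variable (ε : MultHom E P)
variable
  (pp_map : ∀ (n : ℕ) (X Y : Fin n → Type u) (f : X ⟶ Y) (g : (P.E n).obj X) (i : Fin n),
    pp n Y ((P.E n).map f g) i = f i (pp n X g i))
  (pp_unit : ∀ (X : Type u) (x : X) (i : Fin 1),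
    pp 1 (fun _ => X) (P.unit X x) i = x)
  (pp_subst : ∀ {k : ℕ} (n : Fin k → ℕ) (X : ∀ i, Fin (n i) → Type u)
    (h : (P.E k).obj (fun i => (P.E (n i)).obj (X i))) (p : Fin (∑ i, n i)),
    pp _ (concat n X) (P.subst n X h) p
      = pp _ (X ((finSigma n).symm p).1)
          (pp k _ h ((finSigma n).symm p).1) ((finSigma n).symm p).2)
variable (hcart : ∀ n : ℕ, IsCartesianNT (ε.app n))

noncomputable def sbar {k : ℕ} (n : Fin k → ℕ) (a : Eb E k) (b : ∀ i, Eb E (n i)) :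
    Eb E (∑ i, n i) :=
  E.subst n (fun _ _ => PUnit.{u+1})
    ((eqv pp ε hcart k (fun i => Eb E (n i))).symm (a, b))

include pp_map pp_subst in
theorem eqv_subst {k : ℕ} (n : Fin k → ℕ) (X : ∀ i, Fin (n i) → Type u)
    (g : (E.E k).obj (fun i => (E.E (n i)).obj (X i))) :
    eqv pp ε hcart (∑ i, n i) (concat n X) (E.subst n X g)
      = (sbar pp ε hcart n (bar g) (fun i => bar (epr pp ε g i)),
         fun p => epr pp ε (epr pp ε g ((finSigma n).symm p).1) ((finSigma n).symm p).2) := by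
  refine Prod.ext ?_ (funext fun p => epr_subst pp ε pp_map pp_subst n X g p)
  show bar (E.subst n X g) = _
  rw [bar_subst]
  show _ = E.subst n (fun _ _ => PUnit.{u+1})
    ((eqv pp ε hcart k (fun i => Eb E (n i))).symm (bar g, fun i => bar (epr pp ε g i)))
  refine congrArg (E.subst n (fun _ _ => PUnit.{u+1})) ?_
  rw [Equiv.eq_symm_apply]
  exact eqv_map pp ε pp_map hcart _ _ (fun i => (E.E (n i)).map (tmor (X i))) g

end
end Stmt17
namespace Stmt17
open Paper CategoryTheory CategoryTheory.Limits

theorem sum_concat {k : ℕ} (n : Fin k → ℕ) (m : ∀ i, Fin (n i) → ℕ) :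
    ∑ p, concat n m p = ∑ i, ∑ j, m i j := by
  rw [← Fintype.sum_equiv (finSigma n) (fun x : Σ i, Fin (n i) => m x.1 x.2) (concat n m)
    (fun x => congrArg (fun y : Σ i, Fin (n i) => m y.1 y.2) (Equiv.symm_apply_apply (finSigma n) x).symm)]
  exact (Finset.sum_sigma' _ _ _).symm

variable {P E : Multitensor (Type u)}

section
variable (pp : ∀ (n : ℕ) (X : Fin n → Type u), (P.E n).obj X ≃ ∀ i, X i)
variable (ε : MultHom E P)
variable
  (pp_map : ∀ (n : ℕ) (X Y : Fin n → Type u) (f : X ⟶ Y) (g : (P.E n).obj X) (i : Fin n),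
    pp n Y ((P.E n).map f g) i = f i (pp n X g i))
  (pp_unit : ∀ (X : Type u) (x : X) (i : Fin 1),
    pp 1 (fun _ => X) (P.unit X x) i = x)
  (pp_subst : ∀ {k : ℕ} (n : Fin k → ℕ) (X : ∀ i, Fin (n i) → Type u)
    (h : (P.E k).obj (fun i => (P.E (n i)).obj (X i))) (p : Fin (∑ i, n i)),
    pp _ (concat n X) (P.subst n X h) p
      = pp _ (X ((finSigma n).symm p).1)
          (pp k _ h ((finSigma n).symm p).1) ((finSigma n).symm p).2)
variable (hcart : ∀ n : ℕ, IsCartesianNT (ε.app n))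

include pp_map pp_unit in
theorem axiom1 (n : ℕ) (a : Eb E n) :
    HEq (sbar pp ε hcart (fun _ : Fin 1 => n) (E.unit PUnit.{u+1} PUnit.unit) (fun _ => a)) a := by
  have e1 : (eqv pp ε hcart 1 (fun _ => Eb E n)).symm
      (E.unit PUnit.{u+1} PUnit.unit, fun _ => a) = E.unit (Eb E n) a := by
    rw [← eqv_unit pp ε pp_unit hcart (Eb E n) a]
    exact Equiv.symm_apply_apply _ _
  have e2 : sbar pp ε hcart (fun _ : Fin 1 => n) (E.unit PUnit.{u+1} PUnit.unit) (fun _ => a)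
      = E.subst (fun _ : Fin 1 => n) (fun _ _ => PUnit.{u+1}) (E.unit (Eb E n) a) := by
    unfold sbar
    rw [e1]
  refine (heq_of_eq e2).trans ?_
  exact heq_apply (congrArg (Eb E) (by simp : (∑ _ : Fin 1, n) = n))
    (E.subst_unit_left (fun _ : Fin n => PUnit.{u+1})) a

include pp_map in
theorem axiom2 (k : ℕ) (a : Eb E k) :
    HEq (sbar pp ε hcart (fun _ : Fin k => 1) a (fun _ => E.unit PUnit.{u+1} PUnit.unit)) a := by
  have e1 : eqv pp ε hcart k (fun _ => Eb E 1)
      ((E.E k).map (fun _ => E.unit PUnit.{u+1}) a)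
      = (a, fun _ => E.unit PUnit.{u+1} PUnit.unit) := by
    rw [eqv_map pp ε pp_map hcart (fun _ => PUnit.{u+1}) (fun _ => Eb E 1)
      (fun _ => E.unit PUnit.{u+1}) a]
    exact Prod.ext (bar_bar a) rfl
  have e2 : (eqv pp ε hcart k (fun _ => Eb E 1)).symm
      (a, fun _ => E.unit PUnit.{u+1} PUnit.unit)
      = (E.E k).map (fun _ => E.unit PUnit.{u+1}) a := by
    rw [← e1, Equiv.symm_apply_apply]
  have e3 : sbar pp ε hcart (fun _ : Fin k => 1) a (fun _ => E.unit PUnit.{u+1} PUnit.unit)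
      = E.subst (fun _ : Fin k => 1) (fun _ _ => PUnit.{u+1})
          ((E.E k).map (fun _ => E.unit PUnit.{u+1}) a) := by
    unfold sbar
    rw [e2]
  refine (heq_of_eq e3).trans ?_
  exact heq_apply (congrArg (Eb E) (by simp : (∑ _ : Fin k, (1:ℕ)) = k))
    (E.subst_unit_right (fun _ : Fin k => PUnit.{u+1})) a

include pp_map pp_subst in
theorem axiom3 (k : ℕ) (n : Fin k → ℕ) (m : ∀ i, Fin (n i) → ℕ)
    (a : Eb E k) (b : ∀ i, Eb E (n i)) (c : ∀ i j, Eb E (m i j)) :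
    HEq (sbar pp ε hcart (concat n m) (sbar pp ε hcart n a b)
          (fun p => c ((finSigma n).symm p).1 ((finSigma n).symm p).2))
        (sbar pp ε hcart (fun i => ∑ j, m i j) a
          (fun i => sbar pp ε hcart (m i) (b i) (c i))) := by
  set inner : ∀ i, (E.E (n i)).obj (fun j => Eb E (m i j)) :=
    fun i => (eqv pp ε hcart (n i) (fun j => Eb E (m i j))).symm (b i, c i) with hinner
  set g₀ := (eqv pp ε hcart k (fun i => (E.E (n i)).obj (fun j => Eb E (m i j)))).symm
    (a, inner) with hg₀
  have hg : eqv pp ε hcart k (fun i => (E.E (n i)).obj (fun j => Eb E (m i j))) g₀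
      = (a, inner) := Equiv.apply_symm_apply _ _
  have hinner_app : ∀ i, eqv pp ε hcart (n i) (fun j => Eb E (m i j)) (inner i) = (b i, c i) :=
    fun i => Equiv.apply_symm_apply _ _
  have hb : bar g₀ = a := congrArg Prod.fst hg
  have hepr : ∀ i, epr pp ε g₀ i = inner i := fun i => congrFun (congrArg Prod.snd hg) i
  -- RHS of the goal
  have hR : sbar pp ε hcart (fun i => ∑ j, m i j) a
        (fun i => sbar pp ε hcart (m i) (b i) (c i))
      = E.subst (fun i => ∑ j, m i j) (fun _ _ => PUnit.{u+1})
          ((E.E k).map (fun i => E.subst (m i) (fun _ _ => PUnit.{u+1})) g₀) := by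
    have h2 := eqv_map pp ε pp_map hcart
      (fun i => (E.E (n i)).obj (fun j => Eb E (m i j)))
      (fun i => Eb E (∑ j, m i j))
      (fun i => E.subst (m i) (fun _ _ => PUnit.{u+1})) g₀
    have h3 : ((a : Eb E k), fun i => sbar pp ε hcart (m i) (b i) (c i))
        = eqv pp ε hcart k (fun i => Eb E (∑ j, m i j))
            ((E.E k).map (fun i => E.subst (m i) (fun _ _ => PUnit.{u+1})) g₀) := by
      refine Eq.trans ?_ h2.symm
      rw [hg]
      rfl
    show E.subst (fun i => ∑ j, m i j) (fun _ _ => PUnit.{u+1}) _ = _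
    refine congrArg (E.subst (fun i => ∑ j, m i j) (fun _ _ => PUnit.{u+1})) ?_
    rw [h3]; exact Equiv.symm_apply_apply _ _
  -- LHS of the goal
  have hsub := eqv_subst pp ε pp_map pp_subst hcart n (fun i j => Eb E (m i j)) g₀
  have e4 : (eqv pp ε hcart (∑ i, n i) (concat n (fun i j => Eb E (m i j)))).symm
        (sbar pp ε hcart n a b,
         fun p => c ((finSigma n).symm p).1 ((finSigma n).symm p).2)
      = E.subst n (fun i j => Eb E (m i j)) g₀ := by
    rw [Equiv.symm_apply_eq, hsub]
    refine Prod.ext ?_ (funext fun p => ?_)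
    · rw [hb]
      refine congrArg (sbar pp ε hcart n a) (funext fun i => ?_)
      rw [hepr i]
      exact (congrArg Prod.fst (hinner_app i)).symm
    · show c _ _ = epr pp ε (epr pp ε g₀ ((finSigma n).symm p).1) ((finSigma n).symm p).2
      rw [hepr]
      exact (congrFun (congrArg Prod.snd (hinner_app _)) _).symm
  have hL : sbar pp ε hcart (concat n m) (sbar pp ε hcart n a b)
        (fun p => c ((finSigma n).symm p).1 ((finSigma n).symm p).2)
      = E.subst (concat n m) (fun _ _ => PUnit.{u+1})
          (E.subst n (fun i j => Eb E (m i j)) g₀) :=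
    congrArg (E.subst (concat n m) (fun _ _ => PUnit.{u+1})) e4
  have hx := E.subst_assoc n m (fun i j => fun _ : Fin (m i j) => PUnit.{u+1})
  have hBC : Eb E (∑ i, ∑ j, m i j) = Eb E (∑ p, concat n m p) :=
    congrArg (Eb E) (sum_concat n m).symm
  exact (heq_of_eq hL).trans ((heq_apply hBC hx g₀).symm.trans (heq_of_eq hR.symm))

end
end Stmt17
namespace Stmt17
open Paper CategoryTheory CategoryTheory.Limits

variable {P E : Multitensor (Type u)}

theorem master
    (pp : ∀ (n : ℕ) (X : Fin n → Type u), (P.E n).obj X ≃ ∀ i, X i)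
    (ε : MultHom E P)
    (pp_map : ∀ (n : ℕ) (X Y : Fin n → Type u) (f : X ⟶ Y) (g : (P.E n).obj X) (i : Fin n),
      pp n Y ((P.E n).map f g) i = f i (pp n X g i))
    (pp_unit : ∀ (X : Type u) (x : X) (i : Fin 1),
      pp 1 (fun _ => X) (P.unit X x) i = x)
    (pp_subst : ∀ {k : ℕ} (n : Fin k → ℕ) (X : ∀ i, Fin (n i) → Type u)
      (h : (P.E k).obj (fun i => (P.E (n i)).obj (X i))) (p : Fin (∑ i, n i)),
      pp _ (concat n X) (P.subst n X h) p
        = pp _ (X ((finSigma n).symm p).1)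
            (pp k _ h ((finSigma n).symm p).1) ((finSigma n).symm p).2)
    (hcart : ∀ n : ℕ, IsCartesianNT (ε.app n)) :
    ∃ (Ebar : ℕ → Type u) (ubar : Ebar 1)
      (sbar : ∀ {k : ℕ} (n : Fin k → ℕ), Ebar k → (∀ i, Ebar (n i)) → Ebar (∑ i, n i)),
      (∀ (n : ℕ) (a : Ebar n), HEq (sbar (k := 1) (fun _ => n) ubar (fun _ => a)) a) ∧
      (∀ (k : ℕ) (a : Ebar k), HEq (sbar (fun _ : Fin k => 1) a (fun _ => ubar)) a) ∧
      (∀ (k : ℕ) (n : Fin k → ℕ) (m : ∀ i, Fin (n i) → ℕ)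
         (a : Ebar k) (b : ∀ i, Ebar (n i)) (c : ∀ i j, Ebar (m i j)),
        HEq (sbar (Paper.concat n m) (sbar n a b)
              (fun p => c ((Paper.finSigma n).symm p).1 ((Paper.finSigma n).symm p).2))
          (sbar (fun i => ∑ j, m i j) a (fun i => sbar (m i) (b i) (c i)))) ∧
      ∃ eqv : ∀ (n : ℕ) (X : Fin n → Type u), (E.E n).obj X ≃ (Ebar n × ∀ i, X i),
        (∀ (n : ℕ) (X Y : Fin n → Type u) (f : ∀ i, X i ⟶ Y i) (g : (E.E n).obj X),
          eqv n Y ((E.E n).map f g)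
            = ((eqv n X g).1, fun i => f i ((eqv n X g).2 i))) ∧
        (∀ (X : Type u) (x : X), eqv 1 (fun _ => X) (E.unit X x) = (ubar, fun _ => x)) ∧
        (∀ (k : ℕ) (n : Fin k → ℕ) (X : ∀ i, Fin (n i) → Type u)
           (g : (E.E k).obj (fun i => (E.E (n i)).obj (X i))),
          eqv (∑ i, n i) (Paper.concat n X) (E.subst n X g)
            = (sbar n (eqv k _ g).1
                (fun i => (eqv (n i) (X i) ((eqv k _ g).2 i)).1),
               fun p => (eqv (n ((Paper.finSigma n).symm p).1) (X ((Paper.finSigma n).symm p).1)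
                  ((eqv k _ g).2 ((Paper.finSigma n).symm p).1)).2
                  ((Paper.finSigma n).symm p).2)) := by
  refine ⟨Eb E, E.unit PUnit.{u+1} PUnit.unit,
    fun {k} n a b => sbar pp ε hcart n a b,
    fun n a => axiom1 pp ε pp_map pp_unit hcart n a,
    fun k a => axiom2 pp ε pp_map hcart k a,
    fun k n m a b c => axiom3 pp ε pp_map pp_subst hcart k n m a b c,
    eqv pp ε hcart,
    fun n X Y f g => eqv_map pp ε pp_map hcart X Y f g,
    fun X x => eqv_unit pp ε pp_unit hcart X x,
    fun k n X g => eqv_subst pp ε pp_map pp_subst hcart n X g⟩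

end Stmt17


/-- STATEMENT 17: Let `ε : E → 𝒯^×` be a cartesian multitensor morphism, where `𝒯` is the
identity monad on `Set` (so that `𝒯^×ₙ(X₁,…,Xₙ) = ∏ᵢXᵢ`).  Then `E` is determined by the
sets `Ēₙ := Eₙ(1,…,1)` via `Eₙ(X₁,…,Xₙ) ≅ Ēₙ × ∏ᵢXᵢ` (compatibly with the functorial
action), and the unit and substitution of `E` correspond under these isomorphisms exactly
to a non-symmetric operad structure `(Ē, ū, σ̄)` in `Set`, satisfying the non-symmetric
operad axioms. -/
theorem cartesian_multitensor_over_identity_is_set_operad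
    (T : CategoryTheory.Monad (Type u)) (hT : T.toFunctor = 𝟭 (Type u))
    (P : Paper.Multitensor (Type u)) (hP : Paper.IsTcross T P)
    (E : Paper.Multitensor (Type u)) (ε : Paper.MultHom E P)
    (hcart : ∀ n : ℕ, Paper.IsCartesianNT (ε.app n)) :
    ∃ (Ebar : ℕ → Type u) (ubar : Ebar 1)
      (sbar : ∀ {k : ℕ} (n : Fin k → ℕ), Ebar k → (∀ i, Ebar (n i)) → Ebar (∑ i, n i)),
      -- the non-symmetric operad axioms for (Ē, ū, σ̄):
      (∀ (n : ℕ) (a : Ebar n), HEq (sbar (k := 1) (fun _ => n) ubar (fun _ => a)) a) ∧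
      (∀ (k : ℕ) (a : Ebar k), HEq (sbar (fun _ : Fin k => 1) a (fun _ => ubar)) a) ∧
      (∀ (k : ℕ) (n : Fin k → ℕ) (m : ∀ i, Fin (n i) → ℕ)
         (a : Ebar k) (b : ∀ i, Ebar (n i)) (c : ∀ i j, Ebar (m i j)),
        HEq (sbar (Paper.concat n m) (sbar n a b)
              (fun p => c ((Paper.finSigma n).symm p).1 ((Paper.finSigma n).symm p).2))
          (sbar (fun i => ∑ j, m i j) a (fun i => sbar (m i) (b i) (c i)))) ∧
      -- E is identified with Ēₙ × ∏ᵢ Xᵢ, compatibly with everything: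
      ∃ eqv : ∀ (n : ℕ) (X : Fin n → Type u), (E.E n).obj X ≃ (Ebar n × ∀ i, X i),
        (∀ (n : ℕ) (X Y : Fin n → Type u) (f : ∀ i, X i ⟶ Y i) (g : (E.E n).obj X),
          eqv n Y ((E.E n).map f g)
            = ((eqv n X g).1, fun i => f i ((eqv n X g).2 i))) ∧
        (∀ (X : Type u) (x : X), eqv 1 (fun _ => X) (E.unit X x) = (ubar, fun _ => x)) ∧
        (∀ (k : ℕ) (n : Fin k → ℕ) (X : ∀ i, Fin (n i) → Type u)
           (g : (E.E k).obj (fun i => (E.E (n i)).obj (X i))),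
          eqv (∑ i, n i) (Paper.concat n X) (E.subst n X g)
            = (sbar n (eqv k _ g).1
                (fun i => (eqv (n i) (X i) ((eqv k _ g).2 i)).1),
               fun p => (eqv (n ((Paper.finSigma n).symm p).1) (X ((Paper.finSigma n).symm p).1)
                  ((eqv k _ g).2 ((Paper.finSigma n).symm p).1)).2
                  ((Paper.finSigma n).symm p).2)) := by
  obtain ⟨Tf, η, μ, hassoc, hlu, hru⟩ := T
  change Tf = 𝟭 (Type u) at hT
  subst hT
  have ηid : ∀ (X : Type u) (x : X), η.app X x = x := by
    intro X x
    have h := types_congr_hom (η.naturality (↾fun _ : PUnit.{u+1} => x)) PUnit.unit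
    simpa using h
  have μid : ∀ (X : Type u) (x : X), μ.app X x = x := by
    intro X x
    have h := types_congr_hom (μ.naturality (↾fun _ : PUnit.{u+1} => x)) PUnit.unit
    simpa using h
  refine Stmt17.master
    (fun n X => ((CategoryTheory.eqToIso (hP.obj_eq n X)).toEquiv).trans
      (CategoryTheory.Limits.Types.productIso.{0, u} (fun i => X i)).toEquiv)
    ε ?_ ?_ ?_ hcart
  · intro n X Y f g i
    have h := types_congr_hom (hP.map_eq n X Y f i) g
    simp only [types_comp_apply] at h
    exact h
  · intro X x i
    have h := types_congr_hom (hP.unit_eq X i) x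
    simp only [types_comp_apply] at h
    exact h.trans (ηid X x)
  · intro k n X h p
    have h2 := types_congr_hom (hP.subst_eq n X p) h
    simp only [types_comp_apply] at h2
    exact h2.trans (μid _ _)
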